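/- If a nonprincipal ultrafilter U on ℕ is a pseudo-P_κ point, then the splitting number 𝔰 is at least κ. -/
import Mathlib


open Cardinal Set Filter

/-- A nonprincipal ultrafilter on ℕ: one that is not of the form `pure n`. -/
def Nonprincipal (U : Ultrafilter ℕ) : Prop := ∀ n : ℕ, U ≠ pure n

/-- `C` is cofinal in the ultrapower `U-prod ω` with respect to `≤_U`. -/
def UCofinal (U : Ultrafilter ℕ) (C : Set (ℕ → ℕ)) : Prop :=
  ∀ f : ℕ → ℕ, ∃ g ∈ C, {n : ℕ | f n ≤ g n} ∈ U

/-- The cofinality of the ultrapower `U-prod ω`: the least cardinality of a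
set of functions cofinal with respect to `≤_U`. -/
noncomputable def cfUProd (U : Ultrafilter ℕ) : Cardinal :=
  sInf {c : Cardinal | ∃ C : Set (ℕ → ℕ), UCofinal U C ∧ c = #C}

/-- The bounding number 𝔟. -/
noncomputable def boundingNumber : Cardinal :=
  sInf {c : Cardinal | ∃ B : Set (ℕ → ℕ),
    (∀ f : ℕ → ℕ, ∃ g ∈ B, {n : ℕ | f n ≤ g n}.Infinite) ∧ c = #B}

/-- The dominating number 𝔡. -/
noncomputable def dominatingNumber : Cardinal :=
  sInf {c : Cardinal | ∃ D : Set (ℕ → ℕ),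
    (∀ f : ℕ → ℕ, ∃ g ∈ D, {n : ℕ | ¬ f n ≤ g n}.Finite) ∧ c = #D}

/-- The splitting number 𝔰. -/
noncomputable def splittingNumber : Cardinal :=
  sInf {c : Cardinal | ∃ S : Set (Set ℕ),
    (∀ X : Set ℕ, X.Infinite → ∃ Y ∈ S, (X ∩ Y).Infinite ∧ (X \ Y).Infinite) ∧ c = #S}

/-- A family of infinite subsets of ℕ is groupwise dense if it is closed under
infinite subsets and finite modifications and, for every partition of ℕ into
consecutive finite intervals (given by a strictly increasing sequence starting
at 0), the union of some infinitely many of the intervals is in the family. -/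
def GroupwiseDense (G : Set (Set ℕ)) : Prop :=
  (∀ X ∈ G, X.Infinite) ∧
  (∀ X ∈ G, ∀ Y : Set ℕ, Y ⊆ X → Y.Infinite → Y ∈ G) ∧
  (∀ X ∈ G, ∀ Y : Set ℕ, (symmDiff X Y).Finite → Y ∈ G) ∧
  (∀ a : ℕ → ℕ, a 0 = 0 → StrictMono a →
    ∃ K : Set ℕ, K.Infinite ∧ (⋃ k ∈ K, Set.Ico (a k) (a (k + 1))) ∈ G)

/-- The groupwise density number 𝔤. -/
noncomputable def groupwiseDensityNumber : Cardinal :=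
  sInf {c : Cardinal | ∃ 𝒢 : Set (Set (Set ℕ)),
    (∀ G ∈ 𝒢, GroupwiseDense G) ∧ ⋂₀ 𝒢 = ∅ ∧ c = #𝒢}

/-- `U` is a pseudo-P_κ point. -/
def PseudoPPoint (U : Ultrafilter ℕ) (κ : Cardinal) : Prop :=
  ∀ F : Set (Set ℕ), (∀ A ∈ F, A ∈ U) → #F < κ →
    ∃ A : Set ℕ, A.Infinite ∧ ∀ B ∈ F, (A \ B).Finite

/-- A finite-to-one function on ℕ. -/
def FinToOne (f : ℕ → ℕ) : Prop := ∀ n : ℕ, (f ⁻¹' {n}).Finite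

/-- Two ultrafilters are nearly coherent if they have a common image under
finite-to-one maps. -/
def NearlyCoherent (U U' : Ultrafilter ℕ) : Prop :=
  ∃ f f' : ℕ → ℕ, FinToOne f ∧ FinToOne f' ∧
    Ultrafilter.map f U = Ultrafilter.map f' U'

/-- `nuX X n` is the least element of `X` greater than `n`. -/
noncomputable def nuX (X : Set ℕ) (n : ℕ) : ℕ := sInf {m : ℕ | m ∈ X ∧ n < m}

/-- If U is a pseudo-P_κ point, then 𝔰 ≥ κ. -/
theorem stmt_3 (U : Ultrafilter ℕ) (hU : Nonprincipal U) (κ : Cardinal)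
    (hP : PseudoPPoint U κ) :
    κ ≤ splittingNumber := by
  classical
  apply le_csInf
  · -- the defining set is nonempty: the family of all subsets splits
    refine ⟨#(Set ℕ), Set.univ, ?_, Cardinal.mk_univ.symm⟩
    intro X hX
    set e := hX.natEmbedding with he
    have hinj : Function.Injective fun n : ℕ => (e (2 * n) : ℕ) := by
      intro a b hab
      have := e.injective (Subtype.ext hab)
      omega
    refine ⟨Set.range (fun n : ℕ => (e (2 * n) : ℕ)), trivial, ?_, ?_⟩
    · have hsub : Set.range (fun n : ℕ => (e (2 * n) : ℕ)) ⊆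
          X ∩ Set.range (fun n : ℕ => (e (2 * n) : ℕ)) := by
        rintro x ⟨n, rfl⟩
        exact ⟨(e (2 * n)).2, ⟨n, rfl⟩⟩
      exact (Set.infinite_range_of_injective hinj).mono hsub
    · refine Set.infinite_of_injective_forall_mem
        (f := fun n : ℕ => (e (2 * n + 1) : ℕ)) ?_ ?_
      · intro a b hab
        have := e.injective (Subtype.ext hab)
        omega
      · intro n
        refine ⟨(e (2 * n + 1)).2, ?_⟩
        rintro ⟨m, hm⟩
        have := e.injective (Subtype.ext hm)
        omega
  · rintro c ⟨S, hS, rfl⟩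
    by_contra hlt
    push_neg at hlt
    set F : Set (Set ℕ) := (fun Y => if Y ∈ U then Y else Yᶜ) '' S with hF
    have hFU : ∀ B ∈ F, B ∈ U := by
      rintro B ⟨Y, _, rfl⟩
      by_cases hY : Y ∈ U
      · simp [hY]
      · simpa [hY] using (Ultrafilter.compl_mem_iff_notMem).2 hY
    have hcard : #F < κ := lt_of_le_of_lt (Cardinal.mk_image_le) hlt
    obtain ⟨A, hA, hAF⟩ := hP F hFU hcard
    obtain ⟨Y, hYS, h1, h2⟩ := hS A hA
    by_cases hY : Y ∈ U
    · have : (A \ Y).Finite := by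
        have := hAF (if Y ∈ U then Y else Yᶜ) ⟨Y, hYS, rfl⟩
        simpa [hY] using this
      exact h2 this
    · have : (A \ Yᶜ).Finite := by
        have := hAF (if Y ∈ U then Y else Yᶜ) ⟨Y, hYS, rfl⟩
        simpa [hY] using this
      rw [Set.diff_compl] at this
      exact h1 this
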